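/- Pruning and etching preserve the Euler characteristic: if G is a finite smooth domain in the triangular lattice with interior set H, and p is an interior point removed by a pruning step (p is 1-dimensional in H and is an end point of a branch of H) or by an etching step (p is 2-dimensional in H and lies on an end ridge) such that the graph G′ determined by the interior set H \ {p} (the union of radius-1 balls in X around the points of H \ {p}) is again a smooth domain, then χ(G′) = χ(G). -/

import Mathlib

/-!
Common framework: subgraphs of an ambient simple graph are modelled as vertex sets
with the induced graph structure (this captures condition (iv): domains are induced
subgraphs). Spheres, curvature, interior/boundary points, domains, smooth domains,
simple connectivity, Euler characteristic, and the triangular lattice `tri`.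
-/

namespace TriGB

variable {V : Type*}

/-- The subgraph of `G` induced on the vertex set `T`, as a graph on the ambient
vertex type (vertices outside `T` are isolated). -/
def restrict (G : SimpleGraph V) (T : Set V) : SimpleGraph V where
  Adj a b := a ∈ T ∧ b ∈ T ∧ G.Adj a b
  symm := ⟨fun _ _ ⟨ha, hb, h⟩ => ⟨hb, ha, h.symm⟩⟩
  loopless := ⟨fun a ⟨_, _, h⟩ => G.loopless.irrefl a h⟩

/-- The neighbours of `p` lying inside `T` (the vertex set of the unit sphere of `p`
in the subgraph induced on `T`, for `p ∈ T`). -/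
def nbrs (G : SimpleGraph V) (T : Set V) (p : V) : Set V := {q | q ∈ T ∧ G.Adj p q}

/-- The vertex set of the sphere of radius `r` around `p` in the subgraph induced on `T`:
points of `T` at graph distance `r` from `p` within that subgraph. -/
def sphVerts (G : SimpleGraph V) (T : Set V) (p : V) (r : ℕ) : Set V :=
  {q | q ∈ T ∧ (restrict G T).Reachable p q ∧ (restrict G T).dist p q = r}

/-- The vertex set of the ball of radius `r` around `p` in the subgraph induced on `T`. -/
def ballVerts (G : SimpleGraph V) (T : Set V) (p : V) (r : ℕ) : Set V :=
  {q | q ∈ T ∧ (restrict G T).Reachable p q ∧ (restrict G T).dist p q ≤ r}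

/-- The edges of the sphere of radius `r` around `p`: edges of the (induced) subgraph
joining two vertices at distance `r` from `p`. -/
def sphEdges (G : SimpleGraph V) (T : Set V) (p : V) (r : ℕ) : Set (Sym2 V) :=
  {e | ∃ a b, e = s(a, b) ∧ a ∈ sphVerts G T p r ∧ b ∈ sphVerts G T p r ∧ G.Adj a b}

/-- The arc length `|S_r(p)|`: the number of edges of the sphere of radius `r`. -/
noncomputable def arcLen (G : SimpleGraph V) (T : Set V) (p : V) (r : ℕ) : ℕ :=
  (sphEdges G T p r).ncard

/-- The (second order Puiseux) curvature `K(p) = 2|S₁(p)| - |S₂(p)|`. -/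
noncomputable def curv (G : SimpleGraph V) (T : Set V) (p : V) : ℤ :=
  2 * (arcLen G T p 1 : ℤ) - (arcLen G T p 2 : ℤ)

/-- `p` is an interior point of `T`: its unit sphere within `T` coincides with its
unit sphere in the ambient graph (all neighbours, with all edges between them,
lie in `T`; in the induced model this means all ambient neighbours belong to `T`). -/
def IsInteriorPt (G : SimpleGraph V) (T : Set V) (p : V) : Prop :=
  p ∈ T ∧ ∀ q, G.Adj p q → q ∈ T

/-- `p` is a boundary point of `T`: a non-interior point of `T` adjacent to an
interior point. -/
def IsBoundaryPt (G : SimpleGraph V) (T : Set V) (p : V) : Prop :=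
  p ∈ T ∧ ¬ IsInteriorPt G T p ∧ ∃ q, G.Adj p q ∧ IsInteriorPt G T q

/-- The set of interior points of `T`. -/
def interiorSet (G : SimpleGraph V) (T : Set V) : Set V := {p | IsInteriorPt G T p}

/-- The set of boundary points of `T`. -/
def boundarySet (G : SimpleGraph V) (T : Set V) : Set V := {p | IsBoundaryPt G T p}

/-- `T` is a one-dimensional graph: every vertex of `T` has a nonempty and edgeless
unit sphere within `T`. -/
def OneDimSet (G : SimpleGraph V) (T : Set V) : Prop :=
  ∀ p ∈ T, (nbrs G T p).Nonempty ∧ ∀ q ∈ nbrs G T p, ∀ r ∈ nbrs G T p, ¬ G.Adj q r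

/-- `p` is a two-dimensional point of `T`: its unit sphere within `T` is a
one-dimensional graph. -/
def TwoDimPt (G : SimpleGraph V) (T : Set V) (p : V) : Prop :=
  OneDimSet G (nbrs G T p)

/-- A domain: (i) two-dimensional, (ii) every vertex interior or boundary,
(iii) the boundary points form a one-dimensional graph, (iv) induced (built into
the model), (v) interior points sharing a common boundary point are adjacent or
both adjacent to a third interior point. -/
def IsDomain (G : SimpleGraph V) (T : Set V) : Prop :=
  (∀ p ∈ T, TwoDimPt G T p) ∧
  (∀ p ∈ T, IsInteriorPt G T p ∨ IsBoundaryPt G T p) ∧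
  OneDimSet G (boundarySet G T) ∧
  (∀ p q, IsInteriorPt G T p → IsInteriorPt G T q → p ≠ q →
    (∃ b, IsBoundaryPt G T b ∧ G.Adj p b ∧ G.Adj q b) →
    (G.Adj p q ∨ ∃ r, IsInteriorPt G T r ∧ r ≠ p ∧ r ≠ q ∧ G.Adj p r ∧ G.Adj q r))

/-- A smooth domain: a domain whose complement is also a domain. -/
def IsSmoothDomain (G : SimpleGraph V) (T : Set V) : Prop :=
  IsDomain G T ∧ IsDomain G Tᶜ

/-- A closed loop in `T`: a cyclic sequence of points of `T` such that consecutive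
points are equal or adjacent (curves are loops; trivial loops are constant). -/
def IsLoopIn (G : SimpleGraph V) (T : Set V) {n : ℕ} (x : Fin (n + 1) → V) : Prop :=
  (∀ i, x i ∈ T) ∧ ∀ i, x i = x (i + 1) ∨ G.Adj (x i) (x (i + 1))

/-- An elementary deformation step between loops in `T`: exactly one point moves,
by distance `1`. -/
def LoopStep (G : SimpleGraph V) (T : Set V) {n : ℕ} (x y : Fin (n + 1) → V) : Prop :=
  IsLoopIn G T x ∧ IsLoopIn G T y ∧ ∃ j, G.Adj (x j) (y j) ∧ ∀ i, i ≠ j → x i = y i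

/-- `T` is simply connected: every closed loop of interior points can be deformed,
by finitely many elementary steps within the interior, to a trivial (constant) loop. -/
def SimplyConnected (G : SimpleGraph V) (T : Set V) : Prop :=
  ∀ (n : ℕ) (x : Fin (n + 1) → V), IsLoopIn G (interiorSet G T) x →
    ∃ c : V, Relation.ReflTransGen (LoopStep G (interiorSet G T)) x (fun _ => c)

/-- The edges of the subgraph induced on `T`. -/
def edgesOf (G : SimpleGraph V) (T : Set V) : Set (Sym2 V) :=
  {e | ∃ a b, e = s(a, b) ∧ a ∈ T ∧ b ∈ T ∧ G.Adj a b}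

/-- The (triangular) faces of the subgraph induced on `T`: triples of mutually
adjacent vertices of `T`. -/
def facesOf (G : SimpleGraph V) (T : Set V) : Set (Finset V) :=
  {t | t.card = 3 ∧ ↑t ⊆ T ∧ ∀ a ∈ t, ∀ b ∈ t, a ≠ b → G.Adj a b}

/-- The Euler characteristic `χ = v - e + f`. -/
noncomputable def euler (G : SimpleGraph V) (T : Set V) : ℤ :=
  (T.ncard : ℤ) - ((edgesOf G T).ncard : ℤ) + ((facesOf G T).ncard : ℤ)

/-- The total boundary curvature of a domain. -/
noncomputable def totalCurv (G : SimpleGraph V) (T : Set V) : ℤ :=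
  ∑ᶠ p ∈ boundarySet G T, curv G T p

/-- The ball of radius 1 around `q` in the ambient graph. -/
def ball1 (G : SimpleGraph V) (q : V) : Set V := insert q (G.neighborSet q)

/-- `T` is a cycle (a simple closed one-dimensional graph): nonempty, one-dimensional,
connected, and every vertex has exactly two neighbours within `T`. -/
def IsCycleSet (G : SimpleGraph V) (T : Set V) : Prop :=
  T.Nonempty ∧ OneDimSet G T ∧ (∀ a ∈ T, ∀ b ∈ T, (restrict G T).Reachable a b) ∧
  ∀ q ∈ T, (nbrs G T q).ncard = 2

/-- For a general graph: the number of edges of the unit sphere of `g` (the subgraph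
induced on the neighbours of `g`). -/
noncomputable def sphereEdgeCount (G : SimpleGraph V) (g : V) : ℕ :=
  (edgesOf G (G.neighborSet g)).ncard

/-- The boundary points of a general graph: vertices whose unit sphere is
one-dimensional but not closed (not a cycle). -/
def boundaryVerts (G : SimpleGraph V) : Set V :=
  {g | OneDimSet G (G.neighborSet g) ∧ ¬ IsCycleSet G (G.neighborSet g)}

open Classical in
/-- The combinatorial Puiseux curvature: `6 - |S₁(g)|` at interior points (unit sphere
a cycle) and `3 - |S₁(g)|` at boundary points. -/
noncomputable def K1 (G : SimpleGraph V) (g : V) : ℤ :=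
  if IsCycleSet G (G.neighborSet g) then 6 - (sphereEdgeCount G g : ℤ)
  else 3 - (sphereEdgeCount G g : ℤ)

/-- `A` is a connected component of the subgraph induced on `U`. -/
def IsComponentOf (G : SimpleGraph V) (A U : Set V) : Prop :=
  A.Nonempty ∧ A ⊆ U ∧ (∀ a ∈ A, ∀ b ∈ A, (restrict G A).Reachable a b) ∧
  ∀ a ∈ A, ∀ b ∈ U, G.Adj a b → b ∈ A

/-- The six unit directions of the triangular lattice. -/
def hexDirs : Set (ℤ × ℤ) := {(1, 0), (-1, 0), (0, 1), (0, -1), (1, -1), (-1, 1)}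

lemma neg_mem_hexDirs {d : ℤ × ℤ} (hd : d ∈ hexDirs) : -d ∈ hexDirs := by
  simp only [hexDirs, Set.mem_insert_iff, Set.mem_singleton_iff] at hd ⊢
  rcases hd with rfl | rfl | rfl | rfl | rfl | rfl <;> simp [Prod.ext_iff]

/-- The triangular lattice: the graph on `ℤ²` in which `(k,l)` is adjacent to
`(k±1,l)`, `(k,l±1)`, `(k+1,l-1)`, `(k-1,l+1)`. -/
def tri : SimpleGraph (ℤ × ℤ) where
  Adj p q := p - q ∈ hexDirs
  symm := by
    constructor
    intro p q h
    show q - p ∈ hexDirs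
    rw [show q - p = -(p - q) by ring]
    exact neg_mem_hexDirs h
  loopless := by
    constructor
    intro p h
    simp only [sub_self, hexDirs, Set.mem_insert_iff, Set.mem_singleton_iff] at h
    rcases h with h | h | h | h | h | h <;> simp [Prod.ext_iff] at h


/-- `p` is a one-dimensional point of `H`: its unit sphere within `H` is nonempty
and edgeless. -/
def OneDimPtIn (G : SimpleGraph V) (H : Set V) (p : V) : Prop :=
  p ∈ H ∧ (nbrs G H p).Nonempty ∧ ∀ q ∈ nbrs G H p, ∀ r ∈ nbrs G H p, ¬ G.Adj q r

/-- `p` is a two-dimensional point of `H`: its unit sphere within `H` is a (nonempty)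
one-dimensional graph. -/
def TwoDimPtIn (G : SimpleGraph V) (H : Set V) (p : V) : Prop :=
  p ∈ H ∧ (nbrs G H p).Nonempty ∧ OneDimSet G (nbrs G H p)

/-- The connected component of `p` in the subgraph induced on `A`. -/
def componentOf (G : SimpleGraph V) (A : Set V) (p : V) : Set V :=
  {q | q ∈ A ∧ (restrict G A).Reachable p q}

/-- The one-dimensional points of `H`. -/
def H1set (G : SimpleGraph V) (H : Set V) : Set V := {q | OneDimPtIn G H q}

/-- The two-dimensional points of `H`. -/
def H2set (G : SimpleGraph V) (H : Set V) : Set V := {q | TwoDimPtIn G H q}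

/-- A branch of `H`: a connected component of the one-dimensional points containing a
point with exactly one neighbour in `H`. -/
def IsBranch (G : SimpleGraph V) (H B : Set V) : Prop :=
  (∃ p ∈ H1set G H, B = componentOf G (H1set G H) p) ∧ ∃ q ∈ B, (nbrs G H q).ncard = 1

/-- A bridge of `H`: a connected component of the one-dimensional points which is not
a branch. -/
def IsBridge (G : SimpleGraph V) (H B : Set V) : Prop :=
  (∃ p ∈ H1set G H, B = componentOf G (H1set G H) p) ∧ ¬ ∃ q ∈ B, (nbrs G H q).ncard = 1

/-- A ridge of `H`: a connected component of the two-dimensional points of `H`. -/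
def IsRidge (G : SimpleGraph V) (H R : Set V) : Prop :=
  ∃ p ∈ H2set G H, R = componentOf G (H2set G H) p

/-- An end ridge: a ridge to which at most one bridge is attached. -/
def IsEndRidge (G : SimpleGraph V) (H R : Set V) : Prop :=
  IsRidge G H R ∧ {B : Set V | IsBridge G H B ∧ ∃ a ∈ B, ∃ b ∈ R, G.Adj a b}.ncard ≤ 1

/-- `p` is removed by a pruning step: `p` is one-dimensional in `H` and an end point
of a branch of `H` (it has exactly one neighbour in `H`). -/
def PruningPt (G : SimpleGraph V) (H : Set V) (p : V) : Prop :=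
  OneDimPtIn G H p ∧ (∃ B, IsBranch G H B ∧ p ∈ B) ∧ (nbrs G H p).ncard = 1

/-- `p` is removed by an etching step: `p` is two-dimensional in `H` and lies on an
end ridge of `H`. -/
def EtchingPt (G : SimpleGraph V) (H : Set V) (p : V) : Prop :=
  TwoDimPtIn G H p ∧ ∃ R, IsEndRidge G H R ∧ p ∈ R

/-! ### Auxiliary material for the proof -/

/-- The six hex directions as a `Finset`, for decidable arithmetic case checks. -/
def D6 : Finset (ℤ × ℤ) := {(1,0),(-1,0),(0,1),(0,-1),(1,-1),(-1,1)}

lemma mem_hexDirs_iff {x : ℤ × ℤ} : x ∈ hexDirs ↔ x ∈ D6 := by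
  simp [hexDirs, D6]

lemma arithL1 : ∀ d ∈ D6, ∀ e ∈ D6, d + e ∉ D6 → d + e ≠ 0 → e ≠ d →
    ∃ w ∈ D6, d - w ∈ D6 ∧ d + e - w ∈ D6 := by decide

lemma arithL2 : ∀ d ∈ D6, ∀ u ∈ D6, d - u ∈ D6 → d + u ∉ D6 ∧ d + u ≠ 0 := by decide

lemma arithL3 : ∀ d ∈ D6, ∀ x ∈ D6, ∀ y ∈ D6, d - x ∈ D6 → d - y ∈ D6 → x ≠ y →
    x - y ∉ D6 := by decide

lemma zero_not_D6 : (0 : ℤ × ℤ) ∉ D6 := by decide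

lemma tri_adj_iff {a b : ℤ × ℤ} : tri.Adj a b ↔ a - b ∈ D6 := mem_hexDirs_iff

lemma tri_adj_iff' {a b : ℤ × ℤ} : tri.Adj a b ↔ b - a ∈ D6 := by
  rw [tri.adj_comm]; exact tri_adj_iff

theorem prune_etch_preserve_euler (T : Set (ℤ × ℤ)) (hfin : T.Finite)
    (hsm : IsSmoothDomain tri T) (p : ℤ × ℤ) (hp : IsInteriorPt tri T p)
    (hstep : PruningPt tri (interiorSet tri T) p ∨ EtchingPt tri (interiorSet tri T) p)
    (hsm' : IsSmoothDomain tri (⋃ q ∈ interiorSet tri T \ {p}, ball1 tri q)) :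
    euler tri (⋃ q ∈ interiorSet tri T \ {p}, ball1 tri q) = euler tri T := by
  classical
  set H : Set (ℤ × ℤ) := interiorSet tri T with hHdef
  set T' : Set (ℤ × ℤ) := ⋃ q ∈ H \ {p}, ball1 tri q with hT'def
  -- basic membership facts
  have hballT : ∀ q ∈ H, ball1 tri q ⊆ T := by
    rintro q hq x hx
    rcases Set.mem_insert_iff.1 hx with rfl | hx
    · exact hq.1
    · exact hq.2 x hx
  have hT'T : T' ⊆ T := by
    intro x hx
    simp only [hT'def, Set.mem_iUnion, exists_prop] at hx
    obtain ⟨q, hq, hxq⟩ := hx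
    exact hballT q hq.1 hxq
  have hmemT' : ∀ x q, q ∈ H → q ≠ p → (x = q ∨ tri.Adj q x) → x ∈ T' := by
    intro x q hq hqp hx
    simp only [hT'def, Set.mem_iUnion, exists_prop]
    refine ⟨q, ⟨hq, by simp [hqp]⟩, ?_⟩
    rcases hx with rfl | h
    · exact Set.mem_insert _ _
    · exact Set.mem_insert_of_mem _ h
  have hq0 : ∃ q, q ∈ H ∧ q ≠ p ∧ tri.Adj p q := by
    rcases hstep with ⟨⟨_, ⟨q, hq⟩, _⟩, _, _⟩ | ⟨⟨_, ⟨q, hq⟩, _⟩, _⟩ <;>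
      exact ⟨q, hq.1, hq.2.ne', hq.2⟩
  obtain ⟨q0, hq0H, hq0ne, hq0adj⟩ := hq0
  have hpT' : p ∈ T' := hmemT' p q0 hq0H hq0ne (Or.inr hq0adj.symm)
  set S : Set (ℤ × ℤ) := T \ T' with hSdef
  have hT'eq : T \ S = T' := Set.diff_diff_cancel_left hT'T
  have hpnS : p ∉ S := fun h => h.2 hpT'
  -- any interior point equal or adjacent to a removed point is p
  have hSonly : ∀ b ∈ S, ∀ c, c ∈ H → (b = c ∨ tri.Adj c b) → c = p := by
    intro b hb c hc hrel
    by_contra hcp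
    exact hb.2 (hmemT' b c hc hcp hrel)
  have hSbd : ∀ b ∈ S, IsBoundaryPt tri T b := by
    intro b hb
    rcases hsm.1.2.1 b hb.1 with hint | hbd
    · exfalso
      have hbp : b = p := hSonly b hb b hint (Or.inl rfl)
      rw [hbp] at hb
      exact hpnS hb
    · exact hbd
  have hSadjp : ∀ b ∈ S, tri.Adj p b := by
    intro b hb
    obtain ⟨_, _, q, hadj, hqint⟩ := hSbd b hb
    have hqp : q = p := hSonly b hb q hqint (Or.inr hadj.symm)
    rw [← hqp]; exact hadj.symm
  -- removed points' neighbours in T are all p or neighbours of p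
  have hN1 : ∀ b ∈ S, ∀ c ∈ T, tri.Adj b c → c ≠ p → ¬ tri.Adj p c → c - b ≠ b - p → False := by
    intro b hb c hcT hbc hcp hpc hne
    have hd : b - p ∈ D6 := tri_adj_iff'.1 (hSadjp b hb)
    have he : c - b ∈ D6 := tri_adj_iff'.1 hbc
    have hsum : (b - p) + (c - b) = c - p := by ring
    have hsum_not : (b - p) + (c - b) ∉ D6 := by
      rw [hsum]; exact fun h => hpc (tri_adj_iff'.2 h)
    have hsum_ne : (b - p) + (c - b) ≠ 0 := by
      rw [hsum]; exact sub_ne_zero.2 hcp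
    obtain ⟨w, hw, hw1, hw2⟩ := arithL1 (b - p) hd (c - b) he hsum_not hsum_ne hne
    set f : ℤ × ℤ := p + w with hfdef
    have hfp : tri.Adj p f := by
      rw [tri_adj_iff']
      have : f - p = w := by rw [hfdef]; ring
      rw [this]; exact hw
    have hfT : f ∈ T := hp.2 f hfp
    have hbf : tri.Adj b f := by
      rw [tri_adj_iff]
      have : b - f = (b - p) - w := by rw [hfdef]; ring
      rw [this]; exact hw1
    have hfc : tri.Adj f c := by
      rw [tri_adj_iff']
      have : c - f = (b - p) + (c - b) - w := by rw [hfdef]; ring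
      rw [this]; exact hw2
    have hfnp : f ≠ p := by
      intro h
      have : w = (0 : ℤ × ℤ) := by
        have := sub_eq_zero.2 h
        rw [hfdef] at this; linear_combination this
      exact zero_not_D6 (this ▸ hw)
    -- f is a boundary point
    have hfbd : IsBoundaryPt tri T f := by
      rcases hsm.1.2.1 f hfT with hint | hbd
      · exact absurd (hSonly b hb f hint (Or.inr hbf.symm)) hfnp
      · exact hbd
    -- c is a boundary point
    have hcbd : IsBoundaryPt tri T c := by
      rcases hsm.1.2.1 c hcT with hint | hbd
      · exact absurd (hSonly b hb c hint (Or.inr hbc.symm)) hcp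
      · exact hbd
    -- contradiction with one-dimensionality of the boundary at b
    exact (hsm.1.2.2.1 b (hSbd b hb)).2 f ⟨hfbd, hbf⟩ c ⟨hcbd, hbc⟩ hfc
  have hkey : ∀ b ∈ S, ∀ c ∈ T, tri.Adj b c → c = p ∨ tri.Adj p c := by
    intro b hb c hcT hbc
    by_contra hcon
    push_neg at hcon
    obtain ⟨hcp, hpc⟩ := hcon
    have hd : b - p ∈ D6 := tri_adj_iff'.1 (hSadjp b hb)
    by_cases hed : c - b = b - p
    · -- the "radial" case: use two-dimensionality of b
      have h2d := hsm.1.1 b hb.1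
      have hcmem : c ∈ nbrs tri T b := ⟨hcT, hbc⟩
      obtain ⟨x, hx⟩ := (h2d c hcmem).1
      obtain ⟨⟨hxT, hbx⟩, hcx⟩ := hx
      have hu : x - b ∈ D6 := tri_adj_iff'.1 hbx
      have hdu : (b - p) - (x - b) ∈ D6 := by
        have h9 : c - x = (b - p) - (x - b) := by rw [← hed]; ring
        rw [← h9]; exact tri_adj_iff.1 hcx
      obtain ⟨hsum_not, hsum_ne⟩ := arithL2 (b - p) hd (x - b) hu hdu
      refine hN1 b hb x hxT hbx ?_ ?_ ?_
      · intro h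
        apply hsum_ne
        have : x - p = (b - p) + (x - b) := by ring
        rw [← this, h, sub_self]
      · intro h
        apply hsum_not
        have : x - p = (b - p) + (x - b) := by ring
        rw [← this]; exact tri_adj_iff'.1 h
      · intro h
        apply zero_not_D6
        rw [h] at hdu
        simpa using hdu
    · exact hN1 b hb c hcT hbc hcp hpc hed
  -- counting
  set ES : Set (Sym2 (ℤ × ℤ)) := {e | e ∈ edgesOf tri T ∧ ∃ a ∈ S, a ∈ e} with hESdef
  set FS : Set (Finset (ℤ × ℤ)) := {t | t ∈ facesOf tri T ∧ ∃ a ∈ S, a ∈ t} with hFSdef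
  have hESsub : ES ⊆ edgesOf tri T := fun e he => he.1
  have hFSsub : FS ⊆ facesOf tri T := fun t ht => ht.1
  have hedge : edgesOf tri T' = edgesOf tri T \ ES := by
    ext e
    constructor
    · rintro ⟨a, b, rfl, haT', hbT', hab⟩
      refine ⟨⟨a, b, rfl, hT'T haT', hT'T hbT', hab⟩, ?_⟩
      rintro ⟨-, x, hxS, hxe⟩
      rcases Sym2.mem_iff.1 hxe with rfl | rfl
      · exact hxS.2 haT'
      · exact hxS.2 hbT'
    · rintro ⟨⟨a, b, rfl, haT, hbT, hab⟩, hnot⟩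
      have haT' : a ∈ T' := by
        rw [← hT'eq]
        exact ⟨haT, fun hS => hnot ⟨⟨a, b, rfl, haT, hbT, hab⟩, a, hS, Sym2.mem_mk_left a b⟩⟩
      have hbT' : b ∈ T' := by
        rw [← hT'eq]
        exact ⟨hbT, fun hS => hnot ⟨⟨a, b, rfl, haT, hbT, hab⟩, b, hS, Sym2.mem_mk_right a b⟩⟩
      exact ⟨a, b, rfl, haT', hbT', hab⟩
  have hface : facesOf tri T' = facesOf tri T \ FS := by
    ext t
    constructor
    · rintro ⟨hcard, hsub, hadj⟩
      refine ⟨⟨hcard, hsub.trans hT'T, hadj⟩, ?_⟩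
      rintro ⟨-, x, hxS, hxt⟩
      exact hxS.2 (hsub hxt)
    · rintro ⟨⟨hcard, hsub, hadj⟩, hnot⟩
      refine ⟨hcard, ?_, hadj⟩
      intro x hxt
      rw [← hT'eq]
      exact ⟨hsub hxt, fun hxS => hnot ⟨⟨hcard, hsub, hadj⟩, x, hxS, hxt⟩⟩
  have hEfinT : (edgesOf tri T).Finite := by
    have hsub : edgesOf tri T ⊆ (fun x : (ℤ × ℤ) × (ℤ × ℤ) => s(x.1, x.2)) '' (T ×ˢ T) := by
      rintro e ⟨a, b, rfl, haT, hbT, -⟩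
      exact ⟨(a, b), ⟨haT, hbT⟩, rfl⟩
    exact ((hfin.prod hfin).image _).subset hsub
  have hFfinT : (facesOf tri T).Finite := by
    apply Set.Finite.of_finite_image (f := fun t : Finset (ℤ × ℤ) => (↑t : Set (ℤ × ℤ)))
    · apply hfin.finite_subsets.subset
      rintro s ⟨t, ht, rfl⟩
      exact ht.2.1
    · exact fun t _ t' _ h => Finset.coe_injective h
  have hESfin : ES.Finite := hEfinT.subset hESsub
  have hvcard : S.ncard + T'.ncard = T.ncard := by
    rw [hSdef]; exact Set.ncard_diff_add_ncard_of_subset hT'T hfin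
  have hecard : (edgesOf tri T').ncard + ES.ncard = (edgesOf tri T).ncard := by
    rw [hedge]; exact Set.ncard_diff_add_ncard_of_subset hESsub hEfinT
  have hfcard : (facesOf tri T').ncard + FS.ncard = (facesOf tri T).ncard := by
    rw [hface]; exact Set.ncard_diff_add_ncard_of_subset hFSsub hFfinT
  -- the edges at p which are removed correspond to removed vertices
  set EP : Set (Sym2 (ℤ × ℤ)) := {e | e ∈ ES ∧ p ∈ e} with hEPdef
  have hEPsub : EP ⊆ ES := fun e he => he.1
  have hEPimg : EP = (fun b => s(p, b)) '' S := by
    ext e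
    constructor
    · rintro ⟨⟨⟨a, b, rfl, haT, hbT, hab⟩, x, hxS, hxe⟩, hpe⟩
      rcases Sym2.mem_iff.1 hxe with rfl | rfl
      · rcases Sym2.mem_iff.1 hpe with h | h
        · exact absurd (h ▸ hxS) hpnS
        · exact ⟨x, hxS, by rw [← h, Sym2.eq_swap]⟩
      · rcases Sym2.mem_iff.1 hpe with h | h
        · exact ⟨x, hxS, by rw [← h]⟩
        · exact absurd (h ▸ hxS) hpnS
    · rintro ⟨b, hbS, rfl⟩
      exact ⟨⟨⟨p, b, rfl, hp.1, hbS.1, hSadjp b hbS⟩, b, hbS, Sym2.mem_mk_right p b⟩,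
        Sym2.mem_mk_left p b⟩
  have hEPcard : EP.ncard = S.ncard := by
    rw [hEPimg]
    apply Set.ncard_image_of_injOn
    intro a ha b hb hab
    rcases Sym2.eq_iff.1 hab with ⟨-, h⟩ | ⟨h1, h2⟩
    · exact h
    · rw [h2] at ha; exact absurd ha hpnS
  -- the other removed edges correspond to removed faces
  have hpair : ∀ a b : ℤ × ℤ, ({p, a, b} : Finset (ℤ × ℤ)) = {p, b, a} := by
    intro a b; ext x; simp only [Finset.mem_insert, Finset.mem_singleton]; tauto
  set g : Sym2 (ℤ × ℤ) → Finset (ℤ × ℤ) := Sym2.lift ⟨fun a b => {p, a, b}, hpair⟩ with hgdef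
  have hgmk : ∀ a b : ℤ × ℤ, g s(a, b) = {p, a, b} := fun a b => rfl
  have hgFS : FS = g '' (ES \ EP) := by
    ext t
    constructor
    · rintro ⟨⟨hcard, hsub, hadj⟩, a, haS, hat⟩
      have hanp : a ≠ p := fun h => hpnS (h ▸ haS)
      have hpt : p ∈ t := by
        by_contra hpt
        obtain ⟨x, y, z, hxy, hxz, hyz, ht3⟩ := Finset.card_eq_three.1 hcard
        have hother : ∀ u ∈ t, ∀ v ∈ t, u ≠ a → v ≠ a → u ≠ v → False := by
          intro u hu v hv hua hva huv
          have huT : u ∈ T := hsub hu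
          have hvT : v ∈ T := hsub hv
          have hau : tri.Adj a u := hadj a hat u hu (Ne.symm hua)
          have hav : tri.Adj a v := hadj a hat v hv (Ne.symm hva)
          have huv' : tri.Adj u v := hadj u hu v hv huv
          have hpu : tri.Adj p u := by
            rcases hkey a haS u huT hau with rfl | h
            · exact absurd hu hpt
            · exact h
          have hpv : tri.Adj p v := by
            rcases hkey a haS v hvT hav with rfl | h
            · exact absurd hv hpt
            · exact h
          refine arithL3 (a - p) (tri_adj_iff'.1 (hSadjp a haS)) (u - p) (tri_adj_iff'.1 hpu)
            (v - p) (tri_adj_iff'.1 hpv) ?_ ?_ ?_ ?_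
          · have h8 : a - u = (a - p) - (u - p) := by ring
            rw [← h8]; exact tri_adj_iff.1 hau
          · have h8 : a - v = (a - p) - (v - p) := by ring
            rw [← h8]; exact tri_adj_iff.1 hav
          · exact fun h => huv (by linear_combination h)
          · have h8 : u - v = (u - p) - (v - p) := by ring
            rw [← h8]; exact tri_adj_iff.1 huv'
        subst ht3
        simp only [Finset.mem_insert, Finset.mem_singleton] at hat
        rcases hat with rfl | rfl | rfl
        · exact hother y (by simp) z (by simp) (Ne.symm hxy) (Ne.symm hxz) hyz
        · exact hother x (by simp) z (by simp) hxy (Ne.symm hyz) hxz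
        · exact hother x (by simp) y (by simp) hxz hyz hxy
      have hcard2 : (t.erase p).card = 2 := by
        rw [Finset.card_erase_of_mem hpt, hcard]
      obtain ⟨u, v, huvne, herase⟩ := Finset.card_eq_two.1 hcard2
      have hue : u ∈ t.erase p := by rw [herase]; simp
      have hve : v ∈ t.erase p := by rw [herase]; simp
      have hut : u ∈ t := Finset.mem_of_mem_erase hue
      have hvt : v ∈ t := Finset.mem_of_mem_erase hve
      have hup : u ≠ p := Finset.ne_of_mem_erase hue
      have hvp : v ≠ p := Finset.ne_of_mem_erase hve
      have haeq : a = u ∨ a = v := by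
        have hae : a ∈ t.erase p := Finset.mem_erase.2 ⟨hanp, hat⟩
        rw [herase] at hae
        simpa using hae
      have huvadj : tri.Adj u v := hadj u hut v hvt huvne
      refine ⟨s(u, v), ⟨⟨⟨u, v, rfl, hsub hut, hsub hvt, huvadj⟩, a, haS, ?_⟩, ?_⟩, ?_⟩
      · rcases haeq with h | h
        · rw [h]; exact Sym2.mem_mk_left _ _
        · rw [h]; exact Sym2.mem_mk_right _ _
      · rintro ⟨-, hpe⟩
        rcases Sym2.mem_iff.1 hpe with h | h
        · exact hup h.symm
        · exact hvp h.symm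
      · rw [hgmk]
        have h7 : t = insert p (t.erase p) := (Finset.insert_erase hpt).symm
        rw [h7, herase]
    · rintro ⟨e, ⟨⟨⟨u, v, rfl, huT, hvT, huv⟩, a, haS, hae⟩, hnEP⟩, rfl⟩
      have hpe : p ∉ s(u, v) := fun h => hnEP ⟨⟨⟨u, v, rfl, huT, hvT, huv⟩, a, haS, hae⟩, h⟩
      have hpu : p ≠ u := fun h => hpe (by rw [h]; exact Sym2.mem_mk_left u v)
      have hpv : p ≠ v := fun h => hpe (by rw [h]; exact Sym2.mem_mk_right u v)
      have haeq : a = u ∨ a = v := Sym2.mem_iff.1 hae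
      have hpuadj : tri.Adj p u := by
        rcases haeq with h | h
        · rw [← h]; exact hSadjp a haS
        · have hau : tri.Adj a u := by rw [h]; exact huv.symm
          rcases hkey a haS u huT hau with h2 | h2
          · exact absurd h2.symm hpu
          · exact h2
      have hpvadj : tri.Adj p v := by
        rcases haeq with h | h
        · have hav : tri.Adj a v := by rw [h]; exact huv
          rcases hkey a haS v hvT hav with h2 | h2
          · exact absurd h2.symm hpv
          · exact h2
        · rw [← h]; exact hSadjp a haS
      rw [hgmk]
      have hcard3 : ({p, u, v} : Finset (ℤ × ℤ)).card = 3 := by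
        rw [Finset.card_insert_of_notMem (by simp [hpu, hpv]),
          Finset.card_insert_of_notMem (by simp [huv.ne]), Finset.card_singleton]
      refine ⟨⟨hcard3, ?_, ?_⟩, a, haS, ?_⟩
      · intro x hx
        simp only [Finset.coe_insert, Set.mem_insert_iff, Finset.coe_singleton,
          Set.mem_singleton_iff] at hx
        rcases hx with rfl | rfl | rfl
        · exact hp.1
        · exact huT
        · exact hvT
      · intro x hx y hy hxy
        simp only [Finset.mem_insert, Finset.mem_singleton] at hx hy
        rcases hx with rfl | rfl | rfl <;> rcases hy with rfl | rfl | rfl <;>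
          first
          | exact absurd rfl hxy
          | exact hpuadj
          | exact hpvadj
          | exact huv
          | exact hpuadj.symm
          | exact hpvadj.symm
          | exact huv.symm
      · simp only [Finset.mem_insert, Finset.mem_singleton]
        rcases haeq with h | h
        · exact Or.inr (Or.inl h)
        · exact Or.inr (Or.inr h)
  have hginj : Set.InjOn g (ES \ EP) := by
    rintro e1 ⟨he1, hne1⟩ e2 ⟨he2, hne2⟩ heq
    obtain ⟨u, v, rfl, -, -, huv⟩ := he1.1
    obtain ⟨x, y, rfl, -, -, hxy⟩ := he2.1
    have hpe1 : p ∉ s(u, v) := fun h => hne1 ⟨he1, h⟩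
    have hpe2 : p ∉ s(x, y) := fun h => hne2 ⟨he2, h⟩
    have hpu : p ≠ u := fun h => hpe1 (by rw [h]; exact Sym2.mem_mk_left u v)
    have hpv : p ≠ v := fun h => hpe1 (by rw [h]; exact Sym2.mem_mk_right u v)
    rw [hgmk, hgmk] at heq
    have hu : u = x ∨ u = y := by
      have h1 : u ∈ ({p, x, y} : Finset (ℤ × ℤ)) := by rw [← heq]; simp
      simp only [Finset.mem_insert, Finset.mem_singleton] at h1
      rcases h1 with h | h | h
      · exact absurd h.symm hpu
      · exact Or.inl h
      · exact Or.inr h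
    have hv : v = x ∨ v = y := by
      have h1 : v ∈ ({p, x, y} : Finset (ℤ × ℤ)) := by rw [← heq]; simp
      simp only [Finset.mem_insert, Finset.mem_singleton] at h1
      rcases h1 with h | h | h
      · exact absurd h.symm hpv
      · exact Or.inl h
      · exact Or.inr h
    rcases hu with h1 | h1 <;> rcases hv with h2 | h2
    · exact absurd (h1.trans h2.symm) huv.ne
    · exact Sym2.eq_iff.2 (Or.inl ⟨h1, h2⟩)
    · exact Sym2.eq_iff.2 (Or.inr ⟨h1, h2⟩)
    · exact absurd (h1.trans h2.symm) huv.ne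
  have hENPcard : (ES \ EP).ncard = FS.ncard := by
    rw [hgFS]; exact (Set.ncard_image_of_injOn hginj).symm
  have hsplit : (ES \ EP).ncard + EP.ncard = ES.ncard :=
    Set.ncard_diff_add_ncard_of_subset hEPsub hESfin
  simp only [euler]
  omega
end TriGB
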